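/- arXiv:1503.06426 — 3 statements merged into one kernel-verified Lean document; each statement's English description precedes it below -/
import Mathlib

section
/- Let Σ be a p×p positive definite matrix, Γ ∈ ℝ^p, β⁰ = Σ⁻¹Γ, and let s_ℓ = #{k ≠ ℓ : (Σ⁻¹)_{kℓ} ≠ 0}. For any 0 < r ≤ 1, ‖β⁰‖_r^r ≤ (max_ℓ s_ℓ + 1) · ‖Σ⁻¹‖_∞^r · ‖Γ‖_r^r, where ‖Σ⁻¹‖_∞ = max_{jk} |(Σ⁻¹)_{jk}|. -/
private lemma real_rpow_add_le {x y r : ℝ} (hx : 0 ≤ x) (hy : 0 ≤ y)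
    (hr : 0 ≤ r) (hr1 : r ≤ 1) : (x + y) ^ r ≤ x ^ r + y ^ r := by
  lift x to NNReal using hx
  lift y to NNReal using hy
  have := NNReal.rpow_add_le_add_rpow x y hr hr1
  exact_mod_cast this

private lemma real_sum_rpow_le {ι : Type*} (t : Finset ι) (f : ι → ℝ)
    (hf : ∀ i ∈ t, 0 ≤ f i) {r : ℝ} (hr : 0 < r) (hr1 : r ≤ 1) :
    (∑ i ∈ t, f i) ^ r ≤ ∑ i ∈ t, f i ^ r := by
  classical
  induction t using Finset.induction_on with
  | empty => simp [Real.zero_rpow hr.ne']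
  | insert a t' hnot ih =>
    rw [Finset.sum_insert hnot, Finset.sum_insert hnot]
    calc (f a + ∑ i ∈ t', f i) ^ r ≤ f a ^ r + (∑ i ∈ t', f i) ^ r :=
          real_rpow_add_le (hf a (Finset.mem_insert_self a t'))
            (Finset.sum_nonneg fun i hi => hf i (Finset.mem_insert_of_mem hi)) hr.le hr1
      _ ≤ f a ^ r + ∑ i ∈ t', f i ^ r := by
          gcongr
          exact ih fun i hi => hf i (Finset.mem_insert_of_mem hi)

/-- ℓ_r-sparsity bound in terms of the column sparsities `s_ℓ` of `Σ⁻¹` and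
`‖Σ⁻¹‖_∞ = max_{jk} |(Σ⁻¹)_{jk}|`:
`‖β⁰‖_r^r ≤ (max_ℓ s_ℓ + 1) ‖Σ⁻¹‖_∞^r ‖Γ‖_r^r` for `0 < r ≤ 1`. -/
theorem lr_sparsity_bound_via_column_sparsity (p : ℕ)
    (S : Matrix (Fin p) (Fin p) ℝ) (hS : S.PosDef)
    (Γ : Fin p → ℝ) (β : Fin p → ℝ) (hβ : β = S⁻¹.mulVec Γ)
    (s : Fin p → ℕ)
    (hs : ∀ ℓ, s ℓ = (Finset.univ.filter (fun k => k ≠ ℓ ∧ S⁻¹ k ℓ ≠ 0)).card)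
    (r : ℝ) (hr0 : 0 < r) (hr1 : r ≤ 1) :
    ∑ j, |β j| ^ r ≤
      ((⨆ ℓ, (s ℓ : ℝ)) + 1) * (⨆ j, ⨆ k, |S⁻¹ j k|) ^ r * ∑ ℓ, |Γ ℓ| ^ r := by
  classical
  rcases Nat.eq_zero_or_pos p with hp | hp
  · subst hp; simp
  have : Nonempty (Fin p) := ⟨⟨0, hp⟩⟩
  set A := S⁻¹ with hA
  set M : ℝ := ⨆ j, ⨆ k, |A j k| with hM
  have hMabs : ∀ j k, |A j k| ≤ M := by
    intro j k
    calc |A j k| ≤ ⨆ k, |A j k| := le_ciSup (f := fun k => |A j k|) (Set.Finite.bddAbove (Set.finite_range _)) k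
      _ ≤ M := le_ciSup (f := fun j => ⨆ k, |A j k|) (Set.Finite.bddAbove (Set.finite_range _)) j
  have hM0 : 0 ≤ M := le_trans (abs_nonneg _) (hMabs ⟨0, hp⟩ ⟨0, hp⟩)
  have hsup : ∀ ℓ, (s ℓ : ℝ) ≤ ⨆ ℓ, (s ℓ : ℝ) := fun ℓ =>
    le_ciSup (f := fun ℓ => (s ℓ : ℝ)) (Set.Finite.bddAbove (Set.finite_range _)) ℓ
  have hsup0 : (0:ℝ) ≤ ⨆ ℓ, (s ℓ : ℝ) := le_trans (Nat.cast_nonneg _) (hsup ⟨0, hp⟩)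
  -- column bound
  have hcol : ∀ ℓ, ∑ j, |A j ℓ| ^ r ≤ ((⨆ ℓ, (s ℓ : ℝ)) + 1) * M ^ r := by
    intro ℓ
    set T : Finset (Fin p) := Finset.univ.filter (fun j => A j ℓ ≠ 0) with hT
    have h1 : ∑ j, |A j ℓ| ^ r = ∑ j ∈ T, |A j ℓ| ^ r := by
      rw [hT, Finset.sum_filter_of_ne]
      intro j _ h
      intro h0
      apply h
      rw [h0, abs_zero, Real.zero_rpow hr0.ne']
    have hcard : (T.card : ℝ) ≤ (s ℓ : ℝ) + 1 := by
      have hsub : T ⊆ insert ℓ (Finset.univ.filter (fun k => k ≠ ℓ ∧ A k ℓ ≠ 0)) := by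
        intro j hj
        rw [hT, Finset.mem_filter] at hj
        by_cases hjℓ : j = ℓ
        · rw [hjℓ]; exact Finset.mem_insert_self _ _
        · exact Finset.mem_insert_of_mem (Finset.mem_filter.mpr ⟨Finset.mem_univ _, hjℓ, hj.2⟩)
      have := Finset.card_le_card hsub
      have h2 := Finset.card_insert_le ℓ (Finset.univ.filter (fun k => k ≠ ℓ ∧ A k ℓ ≠ 0))
      have : T.card ≤ s ℓ + 1 := by
        rw [hs ℓ]; omega
      exact_mod_cast this
    calc ∑ j, |A j ℓ| ^ r = ∑ j ∈ T, |A j ℓ| ^ r := h1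
      _ ≤ ∑ _j ∈ T, M ^ r := by
          apply Finset.sum_le_sum
          intro j _
          exact Real.rpow_le_rpow (abs_nonneg _) (hMabs j ℓ) hr0.le
      _ = (T.card : ℝ) * M ^ r := by rw [Finset.sum_const, nsmul_eq_mul]
      _ ≤ ((s ℓ : ℝ) + 1) * M ^ r := by
          apply mul_le_mul_of_nonneg_right hcard (Real.rpow_nonneg hM0 r)
      _ ≤ ((⨆ ℓ, (s ℓ : ℝ)) + 1) * M ^ r := by
          apply mul_le_mul_of_nonneg_right (by linarith [hsup ℓ]) (Real.rpow_nonneg hM0 r)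
  calc ∑ j, |β j| ^ r ≤ ∑ j, ∑ ℓ, (|A j ℓ| * |Γ ℓ|) ^ r := by
        apply Finset.sum_le_sum
        intro j _
        calc |β j| ^ r ≤ (∑ ℓ, |A j ℓ * Γ ℓ|) ^ r := by
              apply Real.rpow_le_rpow (abs_nonneg _) _ hr0.le
              rw [hβ]
              show |A.mulVec Γ j| ≤ _
              rw [Matrix.mulVec, dotProduct]
              exact Finset.abs_sum_le_sum_abs _ _
          _ ≤ ∑ ℓ, |A j ℓ * Γ ℓ| ^ r :=
              real_sum_rpow_le _ _ (fun i _ => abs_nonneg _) hr0 hr1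
          _ = ∑ ℓ, (|A j ℓ| * |Γ ℓ|) ^ r := by simp [abs_mul]
    _ = ∑ ℓ, ∑ j, (|A j ℓ| * |Γ ℓ|) ^ r := Finset.sum_comm
    _ = ∑ ℓ, (∑ j, |A j ℓ| ^ r) * |Γ ℓ| ^ r := by
        apply Finset.sum_congr rfl
        intro ℓ _
        rw [Finset.sum_mul]
        apply Finset.sum_congr rfl
        intro j _
        rw [Real.mul_rpow (abs_nonneg _) (abs_nonneg _)]
    _ ≤ ∑ ℓ, ((⨆ ℓ, (s ℓ : ℝ)) + 1) * M ^ r * |Γ ℓ| ^ r := by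
        apply Finset.sum_le_sum
        intro ℓ _
        exact mul_le_mul_of_nonneg_right (hcol ℓ) (Real.rpow_nonneg (abs_nonneg _) r)
    _ = ((⨆ ℓ, (s ℓ : ℝ)) + 1) * M ^ r * ∑ ℓ, |Γ ℓ| ^ r := by rw [Finset.mul_sum]
end

section
/- Let Σ be a p×p positive definite block-diagonal matrix with maximal block size b_max, let X be a mean-zero random vector with covariance Σ, where variables in different blocks are jointly independent, and let f⁰(X) = g(X_{S}) depend only on variables in a set S of cardinality |S|. Let Γ_ℓ = Cov(f⁰(X), X_ℓ). Then ‖Γ‖₀ ≤ b_max · |S|, and consequently for β⁰ = Σ⁻¹Γ, ‖β⁰‖₀ ≤ b_max² · |S|. -/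
open MeasureTheory ProbabilityTheory

/-- Block dependence: if the covariance `Σ` is block diagonal with maximal
block size `b_max` (blocks given by a partition `P`, variables in distinct
blocks jointly independent) and `f⁰(X) = g(X_S)`, then
`‖Γ‖₀ ≤ b_max |S|` and `‖β⁰‖₀ ≤ b_max² |S|` for `β⁰ = Σ⁻¹ Γ`. -/
theorem block_dependence_sparsity
    {Ω : Type*} [MeasurableSpace Ω] (μ : Measure Ω) [IsProbabilityMeasure μ]
    (p m bmax : ℕ) (X : Fin p → Ω → ℝ) (hXmeas : ∀ j, Measurable (X j))
    (hX2 : ∀ j, MemLp (X j) 2 μ) (hXmean : ∀ j, ∫ ω, X j ω ∂μ = 0)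
    -- partition into blocks of size at most `bmax`
    (P : Fin p → Fin m)
    (hblock : ∀ i : Fin m, (Finset.univ.filter (fun j => P j = i)).card ≤ bmax)
    -- variables in distinct blocks are jointly independent
    (hindep : iIndepFun
      (fun i ω => fun j : {j : Fin p // P j = i} => X j.1 ω) μ)
    (S0 : Matrix (Fin p) (Fin p) ℝ)
    (hS0 : ∀ j k, S0 j k = ∫ ω, X j ω * X k ω ∂μ) (hSpd : S0.PosDef)
    (S : Finset (Fin p)) (g : ({j : Fin p // j ∈ S} → ℝ) → ℝ)
    (hg : Measurable g)
    (f : Ω → ℝ) (hf : ∀ ω, f ω = g (fun j => X j.1 ω)) (hf2 : MemLp f 2 μ)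
    (Γ : Fin p → ℝ)
    (hΓ : ∀ ℓ, Γ ℓ = ∫ ω, f ω * X ℓ ω ∂μ - (∫ ω, f ω ∂μ) * ∫ ω, X ℓ ω ∂μ)
    (β : Fin p → ℝ) (hβ : β = S0⁻¹.mulVec Γ) :
    (Finset.univ.filter (fun ℓ => Γ ℓ ≠ 0)).card ≤ bmax * S.card ∧
    (Finset.univ.filter (fun j => β j ≠ 0)).card ≤ bmax ^ 2 * S.card := by
  classical
  set Y : ∀ i : Fin m, Ω → ({j : Fin p // P j = i} → ℝ) :=
    fun i ω => fun j => X j.1 ω with hY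
  have hYmeas : ∀ i, Measurable (Y i) :=
    fun i => measurable_pi_lambda _ (fun j => hXmeas j.1)
  set A : Finset (Fin m) := S.image P with hA
  set U : Finset (Fin p) := Finset.univ.filter (fun ℓ => P ℓ ∈ A) with hU
  -- Γ vanishes outside U
  have hΓ0 : ∀ ℓ : Fin p, ℓ ∉ U → Γ ℓ = 0 := by
    intro ℓ hℓ
    have hi₀ : P ℓ ∉ A := by simpa [hU] using hℓ
    have hdisj : Disjoint A ({P ℓ} : Finset (Fin m)) := by
      simp [Finset.disjoint_singleton_right, hi₀]
    have h1 := hindep.indepFun_finset A {P ℓ} hdisj hYmeas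
    -- compose
    let φ : ((i : A) → {j : Fin p // P j = i.1} → ℝ) → ℝ :=
      fun y => g (fun j => y ⟨P j.1, Finset.mem_image_of_mem P j.2⟩ ⟨j.1, rfl⟩)
    have hφ : Measurable φ :=
      hg.comp (measurable_pi_lambda _ (fun j =>
        (measurable_pi_apply _).comp (measurable_pi_apply _)))
    let ψ : ((i : ({P ℓ} : Finset (Fin m))) → {j : Fin p // P j = i.1} → ℝ) → ℝ :=
      fun z => z ⟨P ℓ, Finset.mem_singleton_self _⟩ ⟨ℓ, rfl⟩
    have hψ : Measurable ψ := (measurable_pi_apply _).comp (measurable_pi_apply _)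
    have hIF : IndepFun f (X ℓ) μ := by
      have h2 := h1.comp hφ hψ
      have hfe : f = φ ∘ (fun ω (i : A) => Y i ω) := by
        funext ω; simp [φ, hf ω, Function.comp, hY]
      have hxe : X ℓ = ψ ∘ (fun ω (i : ({P ℓ} : Finset (Fin m))) => Y i ω) := by
        funext ω; rfl
      rw [hfe, hxe]; exact h2
    have hmul : ∫ ω, f ω * X ℓ ω ∂μ = (∫ ω, f ω ∂μ) * ∫ ω, X ℓ ω ∂μ :=
      hIF.integral_fun_mul_eq_mul_integral hf2.aestronglyMeasurable (hX2 ℓ).aestronglyMeasurable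
    rw [hΓ ℓ, hmul, hXmean ℓ, mul_zero, sub_zero]
  -- S0 is block diagonal
  have hS00 : ∀ j k : Fin p, P j ≠ P k → S0 j k = 0 := by
    intro j k hne
    have h1 : IndepFun (Y (P j)) (Y (P k)) μ := hindep.indepFun hne
    have h2 : IndepFun (X j) (X k) μ := by
      have := h1.comp (measurable_pi_apply (⟨j, rfl⟩ : {a : Fin p // P a = P j}))
        (measurable_pi_apply (⟨k, rfl⟩ : {a : Fin p // P a = P k}))
      exact this
    have hmul : ∫ ω, X j ω * X k ω ∂μ = (∫ ω, X j ω ∂μ) * ∫ ω, X k ω ∂μ :=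
      h2.integral_fun_mul_eq_mul_integral (hX2 j).aestronglyMeasurable (hX2 k).aestronglyMeasurable
    rw [hS0 j k, hmul, hXmean j, zero_mul]
  -- β vanishes outside U
  have hS0β : S0.mulVec β = Γ := by
    rw [hβ, Matrix.mulVec_mulVec, Matrix.mul_nonsing_inv _ hSpd.det_pos.ne'.isUnit,
      Matrix.one_mulVec]
  have hβ0 : ∀ j : Fin p, j ∉ U → β j = 0 := by
    intro j hj
    by_contra hbj
    set w : Fin p → ℝ := fun k => if k ∈ U then 0 else β k with hw
    have hwne : w ≠ 0 := by
      intro h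
      have := congrFun h j
      simp [hw, hj, hbj] at this
    have hpos := hSpd.dotProduct_mulVec_pos hwne
    have hzero : dotProduct (star w) (S0.mulVec w) = 0 := by
      have key : ∀ k : Fin p, w k * (S0.mulVec w) k = 0 := by
        intro k
        by_cases hk : k ∈ U
        · simp [hw, hk]
        · have hSw : (S0.mulVec w) k = (S0.mulVec β) k := by
            simp only [Matrix.mulVec, dotProduct]
            refine Finset.sum_congr rfl (fun l _ => ?_)
            by_cases hl : l ∈ U
            · have hPkl : P k ≠ P l := by
                intro h
                apply hk
                simp only [hU, Finset.mem_filter, Finset.mem_univ, true_and] at hl ⊢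
                rw [h]; exact hl
              simp [hw, hl, hS00 k l hPkl]
            · simp [hw, hl]
          rw [hSw, hS0β, hΓ0 k hk, mul_zero]
      simp only [dotProduct, star, Pi.star_apply, star_trivial]
      exact Finset.sum_eq_zero (fun k _ => key k)
    rw [hzero] at hpos
    exact lt_irrefl 0 hpos
  -- cardinality of U
  have hUcard : U.card ≤ bmax * S.card := by
    have hUeq : U = A.biUnion (fun i => Finset.univ.filter (fun j => P j = i)) := by
      ext x
      simp [hU, Finset.mem_biUnion]
    rw [hUeq]
    calc (A.biUnion (fun i => Finset.univ.filter (fun j => P j = i))).card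
        ≤ ∑ i ∈ A, (Finset.univ.filter (fun j => P j = i)).card :=
          Finset.card_biUnion_le
      _ ≤ ∑ _i ∈ A, bmax := Finset.sum_le_sum (fun i _ => hblock i)
      _ = A.card * bmax := by rw [Finset.sum_const, smul_eq_mul]
      _ ≤ S.card * bmax := Nat.mul_le_mul_right _ (Finset.card_image_le)
      _ = bmax * S.card := Nat.mul_comm _ _
  have hΓsub : Finset.univ.filter (fun ℓ => Γ ℓ ≠ 0) ⊆ U := by
    intro ℓ hℓ
    simp only [Finset.mem_filter, Finset.mem_univ, true_and] at hℓ
    by_contra h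
    exact hℓ (hΓ0 ℓ h)
  have hβsub : Finset.univ.filter (fun j => β j ≠ 0) ⊆ U := by
    intro j hj
    simp only [Finset.mem_filter, Finset.mem_univ, true_and] at hj
    by_contra h
    exact hj (hβ0 j h)
  constructor
  · exact le_trans (Finset.card_le_card hΓsub) hUcard
  · refine le_trans (Finset.card_le_card hβsub) (le_trans hUcard ?_)
    exact Nat.mul_le_mul_right _ (Nat.le_self_pow two_ne_zero bmax)
end

section
/- Let ε₁,…,εₙ be i.i.d. real random variables with E[εᵢ Xᵢⱼ] = 0 for each j, where X is an n×p random matrix with i.i.d. rows satisfying max_j ‖X_{•j}‖_∞ ≤ C₂ almost surely, and E|εᵢ|² ≤ C₆ < ∞. Then E[max_{1≤j≤p} |n⁻¹ Σᵢ εᵢ Xᵢⱼ|²] ≤ 8 log(2p) C₂² C₆ / n. -/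
open MeasureTheory ProbabilityTheory

namespace NemAux
open Finset
variable {p : ℕ}



noncomputable def Gm (m : ℕ) (v : Fin p → ℝ) : ℝ := ∑ j, v j ^ (2*m)

noncomputable def Fm (m : ℕ) (v : Fin p → ℝ) : ℝ := Gm m v ^ ((m:ℝ)⁻¹)

noncomputable def Dm (m : ℕ) (x z : Fin p → ℝ) : ℝ :=
  2 * Gm m x ^ ((m:ℝ)⁻¹ - 1) * ∑ j, x j ^ (2*m-1) * z j

lemma Gm_nonneg (m : ℕ) (v : Fin p → ℝ) : 0 ≤ Gm m v :=
  sum_nonneg fun _ _ => (even_two_mul m).pow_nonneg _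

lemma Fm_nonneg (m : ℕ) (v : Fin p → ℝ) : 0 ≤ Fm m v :=
  Real.rpow_nonneg (Gm_nonneg m v) _

lemma pow_le_Gm (m : ℕ) (v : Fin p → ℝ) (j : Fin p) : v j ^ (2*m) ≤ Gm m v :=
  single_le_sum (fun j _ => (even_two_mul m).pow_nonneg (v j)) (mem_univ j)

-- m = 1 case : exact identity
lemma smooth_one (x z : Fin p → ℝ) :
    Fm 1 (fun j => x j + z j) ≤ Fm 1 x + Dm 1 x z + (2*(1:ℝ)-1) * Fm 1 z := by
  have h1 : ∀ v : Fin p → ℝ, Fm 1 v = ∑ j, v j ^ 2 := by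
    intro v
    simp [Fm, Gm, Real.rpow_natCast]
  rw [h1, h1, h1]
  have hD : Dm 1 x z = 2 * ∑ j, x j * z j := by
    simp [Dm, Gm]
  rw [hD]
  have : ∀ j : Fin p, (x j + z j)^2 = x j ^2 + 2*(x j * z j) + z j ^2 := fun j => by ring
  rw [Finset.sum_congr rfl fun j _ => this j]
  rw [Finset.sum_add_distrib, Finset.sum_add_distrib, ← Finset.mul_sum]
  ring_nf
  exact le_refl _


lemma Gm_smul (m : ℕ) (c : ℝ) (z : Fin p → ℝ) :
    Gm m (fun j => c * z j) = c^(2*m) * Gm m z := by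
  simp [Gm, mul_pow, Finset.mul_sum]

lemma Fm_smul (m : ℕ) (hm : 1 ≤ m) (c : ℝ) (z : Fin p → ℝ) :
    Fm m (fun j => c * z j) = c^2 * Fm m z := by
  have hm0 : (m:ℝ) ≠ 0 := Nat.cast_ne_zero.mpr (by omega)
  rw [Fm, Gm_smul m, Fm]
  have hc : c^(2*m) = (c^2)^m := by rw [pow_mul]
  rw [hc, Real.mul_rpow (by positivity) (Gm_nonneg m z)]
  congr 1
  rw [← Real.rpow_natCast (c^2) m, ← Real.rpow_mul (by positivity)]
  rw [mul_inv_cancel₀ hm0, Real.rpow_one]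

-- collinear case: x = -t₀ • z
lemma smooth_collinear (m : ℕ) (hm : 1 ≤ m) (z : Fin p → ℝ) (t₀ : ℝ)
    (hGz : 0 < Gm m z) (ht : t₀ ≠ 0) :
    Fm m (fun j => (-t₀) * z j + z j) ≤ Fm m (fun j => (-t₀) * z j)
      + Dm m (fun j => (-t₀) * z j) z + (2*(m:ℝ)-1) * Fm m z := by
  have hm0 : (m:ℝ) ≠ 0 := Nat.cast_ne_zero.mpr (by omega)
  have h1 : Fm m (fun j => (-t₀) * z j + z j) = (1-t₀)^2 * Fm m z := by
    have : (fun j => (-t₀) * z j + z j) = (fun j => (1-t₀) * z j) := by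
      funext j; ring
    rw [this, Fm_smul m hm]
  have h2 : Fm m (fun j => (-t₀) * z j) = t₀^2 * Fm m z := by
    rw [Fm_smul m hm]; ring_nf
  have hD : Dm m (fun j => (-t₀) * z j) z = -2 * t₀ * Fm m z := by
    rw [Dm, Gm_smul m]
    have hsum : ∑ j, ((-t₀) * z j) ^ (2*m-1) * z j = -(t₀^(2*m-1)) * Gm m z := by
      rw [Gm, Finset.mul_sum]
      refine Finset.sum_congr rfl fun j _ => ?_
      rw [mul_pow]
      have hodd : Odd (2*m-1) := by
        refine ⟨m-1, by omega⟩
      rw [hodd.neg_pow]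
      have h5 : z j ^ (2*m-1) * z j = z j ^ (2*m) := by
        rw [← pow_succ]
        congr 1
        omega
      rw [← h5]; ring
    rw [hsum]
    -- remaining : 2 * ((-t₀)^(2m) * Gm z)^(m⁻¹ -1) * (-(t₀^(2m-1)) * Gm z) = -2 t₀ * Fm z
    have hneg : (-t₀:ℝ)^(2*m) = (t₀^2)^m := by
      rw [(even_two_mul m).neg_pow, pow_mul]
    rw [hneg]
    have ht2 : (0:ℝ) < t₀^2 := by positivity
    rw [Real.mul_rpow (by positivity) (le_of_lt hGz)]
    have hA : ((t₀^2)^m : ℝ) ^ ((m:ℝ)⁻¹ - 1) = (t₀^2) ^ ((1:ℝ) - m) := by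
      rw [← Real.rpow_natCast (t₀^2) m, ← Real.rpow_mul (le_of_lt ht2)]
      congr 1
      field_simp
    rw [hA]
    have hB : Gm m z ^ ((m:ℝ)⁻¹ - 1) * Gm m z = Fm m z := by
      rw [Fm]
      nth_rewrite 2 [← Real.rpow_one (Gm m z)]
      rw [← Real.rpow_add hGz]
      norm_num
    have hC : (t₀^2) ^ ((1:ℝ) - m) * t₀^(2*m-1) = t₀ := by
      have : (t₀^(2*m-1) : ℝ) = (t₀^2)^m / t₀ := by
        rw [← pow_mul]
        rw [eq_div_iff ht]
        rw [← pow_succ]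
        congr 1
        omega
      rw [this, ← Real.rpow_natCast (t₀^2) m]
      rw [div_eq_mul_inv, ← mul_assoc, ← Real.rpow_add ht2]
      have : (1:ℝ) - m + m = 1 := by ring
      rw [this, Real.rpow_one]
      field_simp
    calc 2 * ((t₀^2) ^ ((1:ℝ) - m) * (Gm m z ^ ((m:ℝ)⁻¹ - 1))) * (-(t₀^(2*m-1)) * Gm m z)
        = -2 * ((t₀^2) ^ ((1:ℝ) - m) * t₀^(2*m-1)) * (Gm m z ^ ((m:ℝ)⁻¹ - 1) * Gm m z) := by ring
      _ = -2 * t₀ * Fm m z := by rw [hB, hC]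
  rw [h1, h2, hD]
  have hFz : 0 ≤ Fm m z := Fm_nonneg m z
  have hm1 : (1:ℝ) ≤ m := by exact_mod_cast hm
  nlinarith [hFz]


lemma smooth_main (m : ℕ) (hm : 2 ≤ m) (x z : Fin p → ℝ)
    (hpos : ∀ t : ℝ, 0 < Gm m (fun j => x j + t * z j)) :
    Fm m (fun j => x j + z j) ≤ Fm m x + Dm m x z + (2*(m:ℝ)-1) * Fm m z := by
  have hm0 : (m:ℝ) ≠ 0 := Nat.cast_ne_zero.mpr (by omega)
  have hm1 : (1:ℝ) < (m:ℝ) := by exact_mod_cast hm.trans_lt' one_lt_two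
  set c : ℝ := (m:ℝ)⁻¹ with hc
  have hc0 : 0 < c := by positivity
  have hc1 : c ≤ 1 := by rw [hc]; rw [inv_le_one_iff₀]; right; linarith
  set g : ℝ → ℝ := fun t => ∑ j, (x j + t * z j)^(2*m) with hgdef
  set g1 : ℝ → ℝ := fun t => ∑ j, ((2*m : ℕ):ℝ) * (x j + t * z j)^(2*m-1) * z j with hg1def
  set g2 : ℝ → ℝ := fun t =>
    ∑ j, ((2*m:ℕ):ℝ) * (((2*m-1 : ℕ):ℝ) * (x j + t*z j)^(2*m-1-1) * z j) * z j with hg2def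
  have hgpos : ∀ t, 0 < g t := fun t => hpos t
  have haff : ∀ (t : ℝ) (j : Fin p), HasDerivAt (fun s => x j + s * z j) (z j) t := by
    intro t j
    simpa using (hasDerivAt_id t).mul_const (z j) |>.const_add (x j)
  have hgd : ∀ t, HasDerivAt g (g1 t) t := by
    intro t
    exact HasDerivAt.fun_sum fun j _ => (haff t j).pow (2*m)
  have hg1d : ∀ t, HasDerivAt g1 (g2 t) t := by
    intro t
    exact HasDerivAt.fun_sum fun j _ =>
      (((haff t j).pow (2*m-1)).const_mul ((2*m:ℕ):ℝ)).mul_const (z j)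
  set h : ℝ → ℝ := fun t => g t ^ c with hhdef
  set h1 : ℝ → ℝ := fun t => g1 t * c * g t ^ (c - 1) with hh1def
  have hhd : ∀ t, HasDerivAt h (h1 t) t := fun t =>
    (hgd t).rpow_const (Or.inl (hgpos t).ne')
  set h2 : ℝ → ℝ := fun t =>
    (g2 t * c) * g t ^ (c-1) + (g1 t * c) * (g1 t * (c-1) * g t ^ (c-1-1)) with hh2def
  have hh1d : ∀ t, HasDerivAt h1 (h2 t) t := by
    intro t
    have hA : HasDerivAt (fun t => g1 t * c) (g2 t * c) t := (hg1d t).mul_const c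
    have hB : HasDerivAt (fun t => g t ^ (c-1)) (g1 t * (c-1) * g t ^ (c-1-1)) t :=
      (hgd t).rpow_const (Or.inl (hgpos t).ne')
    exact hA.mul hB
  -- the uniform bound on h2
  set K : ℝ := 2*(2*(m:ℝ)-1) * Fm m z with hK
  have hFz : 0 ≤ Fm m z := Fm_nonneg m z
  have hKnn : 0 ≤ K := by
    have : (0:ℝ) ≤ 2*(2*(m:ℝ)-1) := by nlinarith
    exact mul_nonneg this hFz
  have hconj : ((m:ℝ)/((m:ℝ)-1)).HolderConjugate (m:ℝ) := by
    refine Real.HolderConjugate.symm ?_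
    rw [Real.holderConjugate_iff]
    constructor
    · exact hm1
    · field_simp
      ring
  have hbound : ∀ t, h2 t ≤ K := by
    intro t
    have hgpnn : (0:ℝ) ≤ g t ^ (c-1) := Real.rpow_nonneg (hgpos t).le _
    -- second term nonpositive
    have hsecond : (g1 t * c) * (g1 t * (c-1) * g t ^ (c-1-1)) ≤ 0 := by
      have he : (g1 t * c) * (g1 t * (c-1) * g t ^ (c-1-1))
          = (c*(c-1)) * ((g1 t)^2 * g t ^ (c-1-1)) := by ring
      rw [he]
      apply mul_nonpos_of_nonpos_of_nonneg
      · nlinarith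
      · exact mul_nonneg (sq_nonneg _) (Real.rpow_nonneg (hgpos t).le _)
    -- Hölder on g2
    have hrw : ∀ u : ℝ, ((u^(2*m-1-1) : ℝ)) ^ ((m:ℝ)/((m:ℝ)-1)) = u^(2*m) := by
      intro u
      have h22 : (u^(2*m-1-1) : ℝ) = (u^2)^(m-1) := by
        rw [← pow_mul]
        congr 1
        omega
      have h2m : (u^(2*m) : ℝ) = (u^2)^m := by rw [← pow_mul]
      rw [h22, h2m, ← Real.rpow_natCast (u^2) (m-1), ← Real.rpow_natCast (u^2) m,
        ← Real.rpow_mul (by positivity)]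
      congr 1
      have : ((m-1 : ℕ):ℝ) = (m:ℝ) - 1 := by
        rw [Nat.cast_sub (by omega)]; norm_num
      rw [this]
      have hm1' : (m:ℝ) - 1 ≠ 0 := by linarith
      field_simp
    have hholder : ∑ j, (x j + t*z j)^(2*m-1-1) * z j ^2
        ≤ g t ^ (1 - c) * Gm m z ^ c := by
      have := Real.inner_le_Lp_mul_Lq_of_nonneg (univ : Finset (Fin p))
        (f := fun j => (x j + t*z j)^(2*m-1-1)) (g := fun j => z j ^ 2) hconj
        (fun j _ => by
          have : Even (2*m-1-1) := by refine ⟨m-1, by omega⟩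
          exact this.pow_nonneg _)
        (fun j _ => sq_nonneg _)
      refine this.trans (le_of_eq ?_)
      have e1 : ∑ j, ((x j + t*z j)^(2*m-1-1)) ^ ((m:ℝ)/((m:ℝ)-1)) = g t := by
        refine Finset.sum_congr rfl fun j _ => ?_
        rw [hrw]
      have e2 : ∑ j, ((z j ^2 : ℝ)) ^ (m:ℝ) = Gm m z := by
        refine Finset.sum_congr rfl fun j _ => ?_
        rw [Real.rpow_natCast (z j ^ 2) m, ← pow_mul]
      rw [e1, e2]
      have hm1' : (m:ℝ) - 1 ≠ 0 := by linarith
      have ee1 : 1 / ((m:ℝ)/((m:ℝ)-1)) = 1 - c := by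
        rw [one_div_div, hc]
        field_simp
      have ee2 : 1 / (m:ℝ) = c := by rw [hc, one_div]
      rw [ee1, ee2]
    -- first term bound
    have hg2eq : g2 t = ((2*m:ℕ):ℝ) * ((2*m-1:ℕ):ℝ) * ∑ j, (x j + t*z j)^(2*m-1-1) * z j^2 := by
      show (∑ j, ((2*m:ℕ):ℝ) * (((2*m-1 : ℕ):ℝ) * (x j + t*z j)^(2*m-1-1) * z j) * z j) = _
      rw [Finset.mul_sum]
      exact Finset.sum_congr rfl fun j _ => by ring
    have hcast1 : ((2*m:ℕ):ℝ) = 2*(m:ℝ) := by push_cast; ring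
    have hcast2 : ((2*m-1:ℕ):ℝ) = 2*(m:ℝ)-1 := by
      rw [Nat.cast_sub (by omega)]; push_cast; ring
    have h2c : 2*(m:ℝ)*c = 2 := by rw [hc]; field_simp
    have hfirst : g2 t * c * g t ^ (c-1) ≤ K := by
      have hS : g2 t ≤ ((2*m:ℕ):ℝ) * ((2*m-1:ℕ):ℝ) * (g t ^ (1-c) * Gm m z ^ c) := by
        rw [hg2eq]
        have hcc : (0:ℝ) ≤ ((2*m:ℕ):ℝ) * ((2*m-1:ℕ):ℝ) := by positivity
        exact mul_le_mul_of_nonneg_left hholder hcc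
      have hstep : g2 t * c * g t ^ (c-1)
          ≤ (((2*m:ℕ):ℝ) * ((2*m-1:ℕ):ℝ) * (g t ^ (1-c) * Gm m z ^ c)) * c * g t ^ (c-1) := by
        apply mul_le_mul_of_nonneg_right _ hgpnn
        exact mul_le_mul_of_nonneg_right hS hc0.le
      refine hstep.trans (le_of_eq ?_)
      have hcancel : g t ^ ((1:ℝ)-c) * g t ^ (c-1) = 1 := by
        rw [← Real.rpow_add (hgpos t)]
        norm_num
      have expand : (((2*m:ℕ):ℝ) * ((2*m-1:ℕ):ℝ) * (g t ^ ((1:ℝ)-c) * Gm m z ^ c)) * c * g t ^ (c-1)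
          = (2*(m:ℝ)*c) * (2*(m:ℝ)-1) * Gm m z ^ c * (g t ^ ((1:ℝ)-c) * g t ^ (c-1)) := by
        rw [hcast1, hcast2]; ring
      rw [expand, hcancel, h2c, hK, Fm, ← hc]
      ring
    calc h2 t ≤ g2 t * c * g t ^ (c-1) + 0 := by
          exact add_le_add le_rfl hsecond
      _ = g2 t * c * g t ^ (c-1) := by ring
      _ ≤ K := hfirst
  -- ODE comparison
  have hu : ∀ t : ℝ, HasDerivAt (fun s => h1 s - K * s) (h2 t - K) t := fun t =>
    (hh1d t).sub (by simpa using (hasDerivAt_id t).const_mul K)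
  have anti : AntitoneOn (fun s => h1 s - K * s) Set.univ := by
    apply antitoneOn_of_deriv_nonpos convex_univ
    · exact fun t _ => (hu t).continuousAt.continuousWithinAt
    · exact fun t _ => (hu t).differentiableAt.differentiableWithinAt
    · intro t _
      rw [(hu t).deriv]
      linarith [hbound t]
  have h1le : ∀ t : ℝ, 0 ≤ t → h1 t ≤ h1 0 + K * t := by
    intro t ht
    have := anti (Set.mem_univ 0) (Set.mem_univ t) ht
    simp only [mul_zero, sub_zero] at this
    linarith
  set ψ : ℝ → ℝ := fun s => h 0 + s * h1 0 + (K/2) * s^2 - h s with hψdef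
  have hψd : ∀ t : ℝ, HasDerivAt ψ (h1 0 + K * t - h1 t) t := by
    intro t
    have d1 : HasDerivAt (fun s : ℝ => h 0 + s * h1 0) (h1 0) t := by
      simpa using ((hasDerivAt_id t).mul_const (h1 0)).const_add (h 0)
    have d2 : HasDerivAt (fun s : ℝ => (K/2) * s^2) (K * t) t := by
      have := (hasDerivAt_pow 2 t).const_mul (K/2)
      refine this.congr_deriv ?_
      push_cast
      ring
    exact (d1.add d2).sub (hhd t)
  have mono : MonotoneOn ψ (Set.Ici (0:ℝ)) := by
    apply monotoneOn_of_deriv_nonneg (convex_Ici 0)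
    · exact fun t _ => (hψd t).continuousAt.continuousWithinAt
    · exact fun t _ => (hψd t).differentiableAt.differentiableWithinAt
    · intro t ht
      rw [(hψd t).deriv]
      rw [interior_Ici] at ht
      have := h1le t (le_of_lt ht)
      linarith
  have hfin := mono (Set.mem_Ici.mpr le_rfl) (Set.mem_Ici.mpr zero_le_one) zero_le_one
  have hψ0 : ψ 0 = 0 := by simp [hψdef]
  have hψ1 : ψ 1 = h 0 + h1 0 + K/2 - h 1 := by
    simp only [hψdef]
    norm_num
  have hineq : h 1 ≤ h 0 + h1 0 + K/2 := by
    rw [hψ0] at hfin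
    rw [hψ1] at hfin
    linarith
  -- identify endpoints
  have hg1t : g 1 = Gm m (fun j => x j + z j) := by
    show (∑ j, (x j + 1 * z j)^(2*m)) = _
    rw [Gm]
    exact Finset.sum_congr rfl fun j _ => by rw [one_mul]
  have hg0 : g 0 = Gm m x := by
    show (∑ j, (x j + 0 * z j)^(2*m)) = _
    rw [Gm]
    exact Finset.sum_congr rfl fun j _ => by rw [zero_mul, add_zero]
  have hhf1 : h 1 = Fm m (fun j => x j + z j) := by
    show g 1 ^ c = _
    rw [hg1t, Fm, ← hc]
  have hhf0 : h 0 = Fm m x := by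
    show g 0 ^ c = _
    rw [hg0, Fm, ← hc]
  have hh10 : h1 0 = Dm m x z := by
    show g1 0 * c * g 0 ^ (c-1) = Dm m x z
    have e0 : g1 0 = ((2*m:ℕ):ℝ) * ∑ j, x j ^ (2*m-1) * z j := by
      show (∑ j, ((2*m:ℕ):ℝ) * (x j + 0 * z j)^(2*m-1) * z j) = _
      rw [Finset.mul_sum]
      refine Finset.sum_congr rfl fun j _ => by rw [zero_mul, add_zero]; ring
    have hcast1 : ((2*m:ℕ):ℝ) = 2*(m:ℝ) := by push_cast; ring
    have h2c : 2*(m:ℝ)*c = 2 := by rw [hc]; field_simp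
    rw [e0, hg0, Dm, ← hc, hcast1]
    calc 2*(m:ℝ) * (∑ j, x j ^(2*m-1) * z j) * c * Gm m x ^ (c-1)
        = (2*(m:ℝ)*c) * Gm m x ^ (c-1) * ∑ j, x j^(2*m-1)*z j := by ring
      _ = 2 * Gm m x ^ (c-1) * ∑ j, x j^(2*m-1)*z j := by rw [h2c]
  rw [← hhf1, ← hhf0, ← hh10]
  have hKhalf : K/2 = (2*(m:ℝ)-1) * Fm m z := by rw [hK]; ring
  linarith [hineq]


lemma Gm_pos (m : ℕ) {v : Fin p → ℝ} {j : Fin p} (hj : v j ≠ 0) : 0 < Gm m v :=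
  lt_of_lt_of_le ((even_two_mul m).pow_pos hj)
    (single_le_sum (fun j _ => (even_two_mul m).pow_nonneg (v j)) (mem_univ j))

lemma smooth_zero (m : ℕ) (hm : 1 ≤ m) (z : Fin p → ℝ) :
    Fm m z ≤ Fm m (0 : Fin p → ℝ) + Dm m (0 : Fin p → ℝ) z + (2*(m:ℝ)-1) * Fm m z := by
  have hm0 : ((m:ℝ))⁻¹ ≠ 0 := by
    simp only [ne_eq, inv_eq_zero, Nat.cast_eq_zero]; omega
  have hG0 : Gm m (0 : Fin p → ℝ) = 0 := by
    simp [Gm, zero_pow (by omega : 2*m ≠ 0)]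
  have hF0 : Fm m (0 : Fin p → ℝ) = 0 := by
    rw [Fm, hG0, Real.zero_rpow hm0]
  have hD0 : Dm m (0 : Fin p → ℝ) z = 0 := by
    rw [Dm]
    have : ∀ j : Fin p, (0:ℝ) ^ (2*m-1) * z j = 0 := fun j => by
      rw [zero_pow (by omega : 2*m-1 ≠ 0), zero_mul]
    simp only [Pi.zero_apply]
    rw [Finset.sum_congr rfl fun j _ => this j]
    simp
  rw [hF0, hD0]
  have := Fm_nonneg m z
  have hm1 : (1:ℝ) ≤ (m:ℝ) := by exact_mod_cast hm
  nlinarith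



lemma smooth (m : ℕ) (hm : 1 ≤ m) (x z : Fin p → ℝ) :
    Fm m (fun j => x j + z j) ≤ Fm m x + Dm m x z + (2*(m:ℝ)-1) * Fm m z := by
  rcases eq_or_lt_of_le hm with h1 | h2
  · subst h1
    have := smooth_one x z
    norm_num at this ⊢
    convert this using 2 <;> norm_num
  · have hm2 : 2 ≤ m := h2
    have hm1 : (1:ℝ) ≤ (m:ℝ) := by exact_mod_cast hm
    by_cases hz : ∀ j, z j = 0
    · -- z = 0
      have hxz : (fun j => x j + z j) = x := by
        funext j; rw [hz j, add_zero]
      rw [hxz]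
      have hGz : Gm m z = 0 := by
        rw [Gm]
        refine Finset.sum_eq_zero fun j _ => ?_
        rw [hz j, zero_pow (by omega : 2*m ≠ 0)]
      have hFz : Fm m z = 0 := by
        rw [Fm, hGz, Real.zero_rpow]
        simp only [ne_eq, inv_eq_zero, Nat.cast_eq_zero]; omega
      have hDz : Dm m x z = 0 := by
        rw [Dm]
        have : ∀ j : Fin p, x j ^ (2*m-1) * z j = 0 := fun j => by rw [hz j, mul_zero]
        rw [Finset.sum_congr rfl fun j _ => this j]
        simp
      rw [hFz, hDz]
      simp
    · push_neg at hz
      obtain ⟨j₀, hj₀⟩ := hz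
      have hGz : 0 < Gm m z := Gm_pos m hj₀
      by_cases hcol : ∃ t₀ : ℝ, ∀ j, x j + t₀ * z j = 0
      · obtain ⟨t₀, ht₀⟩ := hcol
        have hxz : x = fun j => (-t₀) * z j := by
          funext j
          have := ht₀ j
          linarith
        by_cases ht : t₀ = 0
        · subst ht
          have hx0 : x = (0 : Fin p → ℝ) := by
            rw [hxz]; funext j; simp
          subst hx0
          have h0 : (fun j => (0 : Fin p → ℝ) j + z j) = z := by
            funext j; simp
          rw [h0]
          exact smooth_zero m hm z
        · rw [hxz]
          exact smooth_collinear m hm z t₀ hGz ht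
      · push_neg at hcol
        apply smooth_main m hm2
        intro t
        obtain ⟨j, hj⟩ := hcol t
        exact Gm_pos m hj


lemma Fm_zero (m : ℕ) (hm : 1 ≤ m) : Fm m (fun _ : Fin p => (0:ℝ)) = 0 := by
  have : Gm m (fun _ : Fin p => (0:ℝ)) = 0 := by
    simp [Gm, zero_pow (by omega : 2*m ≠ 0)]
  rw [Fm, this, Real.zero_rpow]
  simp only [ne_eq, inv_eq_zero, Nat.cast_eq_zero]; omega

lemma Gm_le_of_bound (m : ℕ) {v : Fin p → ℝ} {R : ℝ} (hR : 0 ≤ R)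
    (hv : ∀ j, |v j| ≤ R) : Gm m v ≤ (p:ℝ) * R^(2*m) := by
  have : ∀ j : Fin p, v j ^ (2*m) ≤ R^(2*m) := by
    intro j
    calc v j ^(2*m) = |v j| ^ (2*m) := ((even_two_mul m).pow_abs (v j)).symm
      _ ≤ R^(2*m) := pow_le_pow_left₀ (abs_nonneg _) (hv j) _
  calc Gm m v ≤ ∑ _j : Fin p, R^(2*m) := Finset.sum_le_sum fun j _ => this j
    _ = (p:ℝ) * R^(2*m) := by rw [Finset.sum_const]; simp [mul_comm]

lemma Fm_le_of_bound (m : ℕ) (hm : 1 ≤ m) {v : Fin p → ℝ} {R : ℝ} (hR : 0 ≤ R)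
    (hv : ∀ j, |v j| ≤ R) : Fm m v ≤ (p:ℝ)^((m:ℝ)⁻¹) * R^2 := by
  have h1 : Fm m v ≤ ((p:ℝ) * R^(2*m))^((m:ℝ)⁻¹) :=
    Real.rpow_le_rpow (Gm_nonneg m v) (Gm_le_of_bound m hR hv) (by positivity)
  refine h1.trans (le_of_eq ?_)
  rw [Real.mul_rpow (by positivity) (by positivity)]
  congr 1
  have : R^(2*m) = (R^2)^m := by rw [← pow_mul]
  rw [this, Real.pow_rpow_inv_natCast (by positivity) (by omega)]

lemma Gm_rpow_half_le (m : ℕ) (hm : 1 ≤ m) {v : Fin p → ℝ} {R : ℝ} (hR : 0 ≤ R)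
    (hv : ∀ j, |v j| ≤ R) :
    Gm m v ^ ((2*(m:ℝ))⁻¹) ≤ (p:ℝ)^((2*(m:ℝ))⁻¹) * R := by
  have hcast : (2*(m:ℝ)) = ((2*m : ℕ):ℝ) := by push_cast; ring
  have h1 : Gm m v ^ ((2*(m:ℝ))⁻¹) ≤ ((p:ℝ) * R^(2*m))^((2*(m:ℝ))⁻¹) :=
    Real.rpow_le_rpow (Gm_nonneg m v) (Gm_le_of_bound m hR hv) (by positivity)
  refine h1.trans (le_of_eq ?_)
  rw [Real.mul_rpow (by positivity) (by positivity)]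
  congr 1
  rw [hcast, Real.pow_rpow_inv_natCast hR (by omega)]

lemma W_abs_le (m : ℕ) (hm : 1 ≤ m) (x : Fin p → ℝ) (j : Fin p) :
    |2 * Gm m x ^ ((m:ℝ)⁻¹ - 1) * x j ^ (2*m-1)| ≤ 2 * Gm m x ^ ((2*(m:ℝ))⁻¹) := by
  have hM : (0:ℝ) < (m:ℝ) := by exact_mod_cast Nat.pos_of_ne_zero (by omega)
  rcases eq_or_lt_of_le (Gm_nonneg m x) with h0 | hG
  · -- Gm = 0 : all coordinates vanish
    have hx : x j = 0 := by
      have := Finset.sum_eq_zero_iff_of_nonneg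
        (fun j (_ : j ∈ univ) => (even_two_mul m).pow_nonneg (x j)) |>.mp h0.symm j (mem_univ j)
      exact pow_eq_zero_iff (by omega : 2*m ≠ 0) |>.mp this
    rw [hx, zero_pow (by omega : 2*m-1 ≠ 0), mul_zero, abs_zero]
    positivity
  · have habs : |x j| ≤ Gm m x ^ ((2*(m:ℝ))⁻¹) := by
      have h1 : |x j| ^ (2*m) ≤ Gm m x := by
        rw [(even_two_mul m).pow_abs]
        exact pow_le_Gm m x j
      have h2 : (|x j| ^ (2*m) : ℝ) ^ (((2*m:ℕ):ℝ))⁻¹ ≤ Gm m x ^ (((2*m:ℕ):ℝ))⁻¹ :=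
        Real.rpow_le_rpow (by positivity) h1 (by positivity)
      rw [Real.pow_rpow_inv_natCast (abs_nonneg _) (by omega)] at h2
      refine h2.trans (le_of_eq ?_)
      congr 1
      push_cast; ring
    have hWeq : |2 * Gm m x ^ ((m:ℝ)⁻¹ - 1) * x j ^ (2*m-1)|
        = 2 * Gm m x ^ ((m:ℝ)⁻¹ - 1) * |x j| ^ (2*m-1) := by
      rw [abs_mul, abs_mul, abs_pow]
      congr 2
      · norm_num
      · exact abs_of_nonneg (Real.rpow_nonneg hG.le _)
    rw [hWeq]
    have h3 : |x j| ^ (2*m-1) ≤ (Gm m x ^ ((2*(m:ℝ))⁻¹)) ^ (2*m-1) :=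
      pow_le_pow_left₀ (abs_nonneg _) habs _
    have h4 : 2 * Gm m x ^ ((m:ℝ)⁻¹ - 1) * |x j| ^ (2*m-1)
        ≤ 2 * Gm m x ^ ((m:ℝ)⁻¹ - 1) * (Gm m x ^ ((2*(m:ℝ))⁻¹)) ^ (2*m-1) := by
      apply mul_le_mul_of_nonneg_left h3
      positivity
    refine h4.trans (le_of_eq ?_)
    rw [← Real.rpow_natCast (Gm m x ^ ((2*(m:ℝ))⁻¹)) (2*m-1), ← Real.rpow_mul hG.le,
      mul_assoc, ← Real.rpow_add hG]
    congr 2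
    have hcast : ((2*m-1 : ℕ):ℝ) = 2*(m:ℝ)-1 := by
      rw [Nat.cast_sub (by omega)]; push_cast; ring
    rw [hcast]
    field_simp
    ring



lemma nem_numeric (p : ℕ) (hp : 0 < p) :
    (2*((⌈Real.log (2*(p:ℝ))⌉₊ : ℕ):ℝ)-1) * (p:ℝ)^(((⌈Real.log (2*(p:ℝ))⌉₊ : ℕ):ℝ))⁻¹
      ≤ 8 * Real.log (2*(p:ℝ)) := by
  set L := Real.log (2*(p:ℝ)) with hL
  have hp1 : (1:ℝ) ≤ (p:ℝ) := by exact_mod_cast hp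
  have h2p : (1:ℝ) < 2*(p:ℝ) := by linarith
  have hL0 : 0 < L := Real.log_pos h2p
  set m := ⌈L⌉₊ with hm
  have hm1 : 1 ≤ m := Nat.one_le_ceil_iff.mpr hL0
  have hmpos : (0:ℝ) < (m:ℝ) := by exact_mod_cast Nat.pos_of_ne_zero (by omega)
  have hLm : L ≤ (m:ℝ) := Nat.le_ceil L
  -- p^(1/m) ≤ e
  have hpe : (p:ℝ)^((m:ℝ))⁻¹ ≤ Real.exp 1 := by
    have h1 : (p:ℝ)^((m:ℝ))⁻¹ ≤ (2*(p:ℝ))^((m:ℝ))⁻¹ :=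
      Real.rpow_le_rpow (by positivity) (by linarith) (by positivity)
    refine h1.trans ?_
    rw [Real.rpow_def_of_pos (by linarith), ← hL]
    apply Real.exp_le_exp.mpr
    rw [mul_inv_le_iff₀ hmpos, one_mul]
    exact hLm
  have hrnn : (0:ℝ) ≤ (p:ℝ)^((m:ℝ))⁻¹ := Real.rpow_nonneg (by positivity) _
  rcases eq_or_lt_of_le (Nat.succ_le_of_lt hp) with h1 | h2
  · -- p = 1
    have hp1' : p = 1 := h1.symm
    subst hp1'
    have hLle1 : L ≤ 1 := by
      rw [hL]
      norm_num
      calc Real.log 2 ≤ 0.6931471808 := le_of_lt Real.log_two_lt_d9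
        _ ≤ 1 := by norm_num
    have hm1' : m = 1 := le_antisymm (Nat.ceil_le.mpr (by exact_mod_cast hLle1)) hm1
    rw [hm1']
    have hlog2 : (0.6931471803:ℝ) < Real.log 2 := Real.log_two_gt_d9
    have hLeq : L = Real.log 2 := by rw [hL]; norm_num
    rw [hLeq]
    norm_num
    nlinarith
  · -- p ≥ 2
    have hp2 : (2:ℝ) ≤ (p:ℝ) := by exact_mod_cast h2
    have hL2 : 2*Real.log 2 ≤ L := by
      have h4 : (2:ℝ)^2 ≤ 2*(p:ℝ) := by nlinarith
      have := Real.log_le_log (by norm_num) h4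
      rwa [Real.log_pow, Nat.cast_ofNat] at this
    have hmle : (m:ℝ) ≤ L + 1 := le_of_lt (Nat.ceil_lt_add_one hL0.le)
    have hstep : (2*(m:ℝ)-1) * (p:ℝ)^((m:ℝ))⁻¹ ≤ (2*(L+1)-1) * Real.exp 1 := by
      apply mul_le_mul (by linarith) hpe hrnn (by nlinarith)
    refine hstep.trans ?_
    have he : Real.exp 1 < 2.7182818286 := Real.exp_one_lt_d9
    have he0 : 0 < Real.exp 1 := Real.exp_pos 1
    have hlog2 : (0.6931471803:ℝ) < Real.log 2 := Real.log_two_gt_d9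
    nlinarith

end NemAux

open MeasureTheory ProbabilityTheory NemAux

/-- Nemirovski moment bound (Lemma 1 of the paper):
`E[max_j |n⁻¹ ∑ᵢ εᵢ Xᵢⱼ|²] ≤ 8 log(2p) C₂² C₆ / n`. -/
theorem nemirovski_moment_bound
    {Ω : Type*} [MeasurableSpace Ω] (μ : Measure Ω) [IsProbabilityMeasure μ]
    (n p : ℕ) (hn : 0 < n) (hp : 0 < p)
    (ε : Fin n → Ω → ℝ) (X : Fin n → Fin p → Ω → ℝ)
    (hεmeas : ∀ i, Measurable (ε i)) (hXmeas : ∀ i j, Measurable (X i j))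
    -- i.i.d. rows
    (hindep : iIndepFun
      (fun i ω => (ε i ω, fun j => X i j ω)) μ)
    (hident : ∀ i i' : Fin n,
      Measure.map (fun ω => (ε i ω, fun j => X i j ω)) μ =
        Measure.map (fun ω => (ε i' ω, fun j => X i' j ω)) μ)
    (C₂ C₆ : ℝ)
    (hbdd : ∀ i j, ∀ᵐ ω ∂μ, |X i j ω| ≤ C₂)
    (hε2 : ∀ i, MemLp (ε i) 2 μ)
    (hmom : ∀ i, ∫ ω, (ε i ω) ^ 2 ∂μ ≤ C₆)
    (horth : ∀ i j, ∫ ω, ε i ω * X i j ω ∂μ = 0) :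
    ∫ ω, (⨆ j : Fin p, |(n : ℝ)⁻¹ * ∑ i, ε i ω * X i j ω| ^ 2) ∂μ ≤
      8 * Real.log (2 * p) * C₂ ^ 2 * C₆ / n := by
  classical
  have hC₂ : 0 ≤ C₂ := by
    obtain ⟨ω, hω⟩ := (hbdd ⟨0, hn⟩ ⟨0, hp⟩).exists
    exact (abs_nonneg _).trans hω
  have hC₆ : 0 ≤ C₆ := le_trans (integral_nonneg fun ω => sq_nonneg _) (hmom ⟨0, hn⟩)
  have hp1 : (1:ℝ) ≤ (p:ℝ) := by exact_mod_cast hp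
  set L := Real.log (2*(p:ℝ)) with hLdef
  have hL0 : 0 < L := Real.log_pos (by linarith)
  set m := ⌈L⌉₊ with hmdef
  have hm1 : 1 ≤ m := Nat.one_le_ceil_iff.mpr hL0
  have hm0 : (m:ℝ) ≠ 0 := Nat.cast_ne_zero.mpr (by omega)
  have hm0' : m ≠ 0 := by omega
  have hmc1 : (1:ℝ) ≤ (m:ℝ) := by exact_mod_cast hm1
  set B : ℝ := (p:ℝ)^((m:ℝ)⁻¹) * (C₂^2 * C₆) with hBdef
  have hBnn : 0 ≤ B := by positivity
  set pair : Fin n → Ω → ℝ × (Fin p → ℝ) := fun i ω => (ε i ω, fun j => X i j ω) with hpair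
  have hpairm : ∀ i, Measurable (pair i) := fun i =>
    (hεmeas i).prodMk (measurable_pi_lambda _ fun j => hXmeas i j)
  -- a.e. bound on all covariates
  have hXae : ∀ᵐ ω ∂μ, ∀ i j, |X i j ω| ≤ C₂ :=
    ae_all_iff.mpr fun i => ae_all_iff.mpr fun j => hbdd i j
  -- measurability of partial sums
  have hZmeas : ∀ i j, Measurable (fun ω => ε i ω * X i j ω) := fun i j =>
    (hεmeas i).mul (hXmeas i j)
  have hSmeas : ∀ (s : Finset (Fin n)) (j : Fin p),
      Measurable (fun ω => ∑ i ∈ s, ε i ω * X i j ω) := fun s j =>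
    Finset.measurable_sum s fun i _ => hZmeas i j
  have hGmmeas : ∀ (s : Finset (Fin n)),
      Measurable (fun ω => Gm m (fun j => ∑ i ∈ s, ε i ω * X i j ω)) := by
    intro s
    have : (fun ω => Gm m (fun j => ∑ i ∈ s, ε i ω * X i j ω))
        = fun ω => ∑ j : Fin p, (∑ i ∈ s, ε i ω * X i j ω)^(2*m) := rfl
    rw [this]
    exact Finset.measurable_sum _ fun j _ => (hSmeas s j).pow_const (2*m)
  have hFmmeas : ∀ (s : Finset (Fin n)),
      Measurable (fun ω => Fm m (fun j => ∑ i ∈ s, ε i ω * X i j ω)) := fun s =>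
    (hGmmeas s).pow_const _
  -- L² facts
  have hZL2 : ∀ i j, MemLp (fun ω => ε i ω * X i j ω) 2 μ := by
    intro i j
    refine MemLp.of_le_mul (c := C₂) (hε2 i) (hZmeas i j).aestronglyMeasurable ?_
    filter_upwards [hbdd i j] with ω h
    rw [Real.norm_eq_abs, Real.norm_eq_abs, abs_mul]
    calc |ε i ω| * |X i j ω| ≤ |ε i ω| * C₂ := by
          exact mul_le_mul_of_nonneg_left h (abs_nonneg _)
      _ = C₂ * |ε i ω| := mul_comm _ _
  have hZint : ∀ i j, Integrable (fun ω => ε i ω * X i j ω) μ := fun i j =>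
    (hZL2 i j).integrable one_le_two
  have habsε : ∀ i, MemLp (fun ω => |ε i ω|) 2 μ := fun i => by
    simpa [Real.norm_eq_abs] using (hε2 i).norm
  have hRL2 : ∀ s : Finset (Fin n), MemLp (fun ω => C₂ * ∑ i ∈ s, |ε i ω|) 2 μ := by
    intro s
    exact (memLp_finset_sum s fun i _ => habsε i).const_mul C₂
  have hRnn : ∀ (s : Finset (Fin n)) (ω : Ω), 0 ≤ C₂ * ∑ i ∈ s, |ε i ω| := fun s ω =>
    mul_nonneg hC₂ (Finset.sum_nonneg fun i _ => abs_nonneg _)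
  -- a.e. coordinatewise bound on S
  have hSbound : ∀ s : Finset (Fin n), ∀ᵐ ω ∂μ, ∀ j,
      |∑ i ∈ s, ε i ω * X i j ω| ≤ C₂ * ∑ i ∈ s, |ε i ω| := by
    intro s
    filter_upwards [hXae] with ω hX
    intro j
    calc |∑ i ∈ s, ε i ω * X i j ω| ≤ ∑ i ∈ s, |ε i ω * X i j ω| :=
        Finset.abs_sum_le_sum_abs _ _
      _ ≤ ∑ i ∈ s, C₂ * |ε i ω| := by
        refine Finset.sum_le_sum fun i _ => ?_
        rw [abs_mul]
        calc |ε i ω| * |X i j ω| ≤ |ε i ω| * C₂ :=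
            mul_le_mul_of_nonneg_left (hX i j) (abs_nonneg _)
          _ = C₂ * |ε i ω| := mul_comm _ _
      _ = C₂ * ∑ i ∈ s, |ε i ω| := (Finset.mul_sum _ _ _).symm
  -- integrability of Fm of partial sums
  have hFmint : ∀ s : Finset (Fin n),
      Integrable (fun ω => Fm m (fun j => ∑ i ∈ s, ε i ω * X i j ω)) μ := by
    intro s
    refine Integrable.mono' (((hRL2 s).integrable_sq).const_mul ((p:ℝ)^((m:ℝ)⁻¹)))
      (hFmmeas s).aestronglyMeasurable ?_
    filter_upwards [hSbound s] with ω h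
    rw [Real.norm_eq_abs, abs_of_nonneg (Fm_nonneg _ _)]
    exact Fm_le_of_bound m hm1 (hRnn s ω) h
  -- expectation of Fm of a single summand
  have hFmZ : ∀ i : Fin n,
      ∫ ω, Fm m (fun j => ∑ i' ∈ ({i} : Finset (Fin n)), ε i' ω * X i' j ω) ∂μ ≤ B := by
    intro i
    have hle : ∀ᵐ ω ∂μ, Fm m (fun j => ∑ i' ∈ ({i} : Finset (Fin n)), ε i' ω * X i' j ω)
        ≤ ((p:ℝ)^((m:ℝ)⁻¹) * C₂^2) * (ε i ω)^2 := by
      filter_upwards [hXae] with ω hX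
      have h1 : (fun j => ∑ i' ∈ ({i} : Finset (Fin n)), ε i' ω * X i' j ω)
          = fun j => ε i ω * X i j ω := by
        funext j; rw [Finset.sum_singleton]
      rw [h1, Fm_smul m hm1 (ε i ω) (fun j => X i j ω)]
      have h2 : Fm m (fun j => X i j ω) ≤ (p:ℝ)^((m:ℝ)⁻¹) * C₂^2 :=
        Fm_le_of_bound m hm1 hC₂ (fun j => hX i j)
      calc (ε i ω)^2 * Fm m (fun j => X i j ω)
          ≤ (ε i ω)^2 * ((p:ℝ)^((m:ℝ)⁻¹) * C₂^2) :=
            mul_le_mul_of_nonneg_left h2 (sq_nonneg _)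
        _ = ((p:ℝ)^((m:ℝ)⁻¹) * C₂^2) * (ε i ω)^2 := mul_comm _ _
    have hint2 : Integrable (fun ω => ((p:ℝ)^((m:ℝ)⁻¹) * C₂^2) * (ε i ω)^2) μ :=
      ((hε2 i).integrable_sq).const_mul _
    calc ∫ ω, Fm m (fun j => ∑ i' ∈ ({i} : Finset (Fin n)), ε i' ω * X i' j ω) ∂μ
        ≤ ∫ ω, ((p:ℝ)^((m:ℝ)⁻¹) * C₂^2) * (ε i ω)^2 ∂μ :=
          integral_mono_ae (hFmint {i}) hint2 hle
      _ = ((p:ℝ)^((m:ℝ)⁻¹) * C₂^2) * ∫ ω, (ε i ω)^2 ∂μ := integral_const_mul _ _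
      _ ≤ ((p:ℝ)^((m:ℝ)⁻¹) * C₂^2) * C₆ :=
          mul_le_mul_of_nonneg_left (hmom i) (by positivity)
      _ = B := by rw [hBdef]; ring
  -- key induction
  have hind : ∀ s : Finset (Fin n),
      ∫ ω, Fm m (fun j => ∑ i ∈ s, ε i ω * X i j ω) ∂μ ≤ (2*(m:ℝ)-1) * s.card * B := by
    intro s
    induction s using Finset.cons_induction with
    | empty =>
      simp only [Finset.sum_empty, Finset.card_empty, Nat.cast_zero, mul_zero, zero_mul]
      rw [Fm_zero m hm1]
      simp
    | cons i s hi ih =>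
      set Sf : Ω → Fin p → ℝ := fun ω j => ∑ i' ∈ s, ε i' ω * X i' j ω with hSf
      set Zf : Ω → Fin p → ℝ := fun ω j => ε i ω * X i j ω with hZf
      have hpt : ∀ ω, Fm m (fun j => ∑ i' ∈ Finset.cons i s hi, ε i' ω * X i' j ω)
          ≤ Fm m (Sf ω) + Dm m (Sf ω) (Zf ω) + (2*(m:ℝ)-1) * Fm m (Zf ω) := by
        intro ω
        have h1 : (fun j => ∑ i' ∈ Finset.cons i s hi, ε i' ω * X i' j ω)
            = fun j => Sf ω j + Zf ω j := by
          funext j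
          rw [Finset.sum_cons]
          exact add_comm _ _
        rw [h1]
        exact smooth m hm1 (Sf ω) (Zf ω)
      set W : Fin p → Ω → ℝ :=
        fun j ω => 2 * Gm m (Sf ω) ^ ((m:ℝ)⁻¹ - 1) * (Sf ω j)^(2*m-1) with hW
      have hWmeas : ∀ j, Measurable (W j) := by
        intro j
        have : W j = fun ω =>
            (2 * (Gm m (fun j' => ∑ i' ∈ s, ε i' ω * X i' j' ω)) ^ ((m:ℝ)⁻¹ - 1))
              * (∑ i' ∈ s, ε i' ω * X i' j ω)^(2*m-1) := by
          funext ω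
          simp only [hW, hSf]
        rw [this]
        exact (((hGmmeas s).pow_const _).const_mul 2).mul ((hSmeas s j).pow_const _)
      have hWint : ∀ j, Integrable (W j) μ := by
        intro j
        have hg : Integrable
            (fun ω => (2*(p:ℝ)^((2*(m:ℝ))⁻¹)) * (C₂ * ∑ i' ∈ s, |ε i' ω|)) μ :=
          ((hRL2 s).integrable one_le_two).const_mul _
        refine Integrable.mono' hg (hWmeas j).aestronglyMeasurable ?_
        filter_upwards [hSbound s] with ω h
        rw [Real.norm_eq_abs]
        have h1 : |W j ω| ≤ 2 * Gm m (Sf ω) ^ ((2*(m:ℝ))⁻¹) := W_abs_le m hm1 (Sf ω) j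
        refine h1.trans ?_
        have h2 : Gm m (Sf ω) ^ ((2*(m:ℝ))⁻¹)
            ≤ (p:ℝ)^((2*(m:ℝ))⁻¹) * (C₂ * ∑ i' ∈ s, |ε i' ω|) :=
          Gm_rpow_half_le m hm1 (hRnn s ω) h
        calc 2 * Gm m (Sf ω) ^ ((2*(m:ℝ))⁻¹)
            ≤ 2 * ((p:ℝ)^((2*(m:ℝ))⁻¹) * (C₂ * ∑ i' ∈ s, |ε i' ω|)) := by linarith
          _ = (2*(p:ℝ)^((2*(m:ℝ))⁻¹)) * (C₂ * ∑ i' ∈ s, |ε i' ω|) := by ring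
      -- independence of W j and the i-th summand
      have hdisj : Disjoint s ({i} : Finset (Fin n)) := Finset.disjoint_singleton_right.mpr hi
      have hIF := hindep.indepFun_finset s {i} hdisj hpairm
      have hWZindep : ∀ j, IndepFun (W j) (fun ω => ε i ω * X i j ω) μ := by
        intro j
        have hsumm : ∀ j' : Fin p,
            Measurable (fun v : ({x // x ∈ s} → ℝ × (Fin p → ℝ)) =>
              ∑ k : {x // x ∈ s}, (v k).1 * (v k).2 j') := by
          intro j'
          apply Finset.measurable_sum
          intro k _
          exact (measurable_fst.comp (measurable_pi_apply k)).mul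
            ((measurable_pi_apply j').comp (measurable_snd.comp (measurable_pi_apply k)))
        have hφ : Measurable (fun v : ({x // x ∈ s} → ℝ × (Fin p → ℝ)) =>
            2 * (∑ j' : Fin p,
                (∑ k : {x // x ∈ s}, (v k).1 * (v k).2 j')^(2*m))^((m:ℝ)⁻¹-1)
              * (∑ k : {x // x ∈ s}, (v k).1 * (v k).2 j)^(2*m-1)) := by
          exact ((((Finset.measurable_sum Finset.univ
            fun j' _ => (hsumm j').pow_const (2*m))).pow_const _).const_mul 2).mul
            ((hsumm j).pow_const _)
        have hψ : Measurable (fun v : ({x // x ∈ ({i} : Finset (Fin n))} → ℝ × (Fin p → ℝ)) =>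
            (v ⟨i, Finset.mem_singleton_self i⟩).1
              * (v ⟨i, Finset.mem_singleton_self i⟩).2 j) :=
          (measurable_fst.comp (measurable_pi_apply _)).mul
            ((measurable_pi_apply j).comp (measurable_snd.comp (measurable_pi_apply _)))
        have hcomp := hIF.comp hφ hψ
        have he1 : ((fun v : ({x // x ∈ s} → ℝ × (Fin p → ℝ)) =>
            2 * (∑ j' : Fin p,
                (∑ k : {x // x ∈ s}, (v k).1 * (v k).2 j')^(2*m))^((m:ℝ)⁻¹-1)
              * (∑ k : {x // x ∈ s}, (v k).1 * (v k).2 j)^(2*m-1))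
            ∘ (fun ω (k : {x // x ∈ s}) => pair k ω)) = W j := by
          funext ω
          simp only [Function.comp_apply, hpair, hW, hSf]
          have hs : ∀ j' : Fin p,
              (∑ k : {x // x ∈ s}, ε (↑k) ω * X (↑k) j' ω)
                = ∑ i' ∈ s, ε i' ω * X i' j' ω := fun j' =>
            Finset.sum_coe_sort s (fun i' => ε i' ω * X i' j' ω)
          simp only [hs]
          rfl
        have he2 : ((fun v : ({x // x ∈ ({i} : Finset (Fin n))} → ℝ × (Fin p → ℝ)) =>
            (v ⟨i, Finset.mem_singleton_self i⟩).1
              * (v ⟨i, Finset.mem_singleton_self i⟩).2 j)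
            ∘ (fun ω (k : {x // x ∈ ({i} : Finset (Fin n))}) => pair k ω))
            = fun ω => ε i ω * X i j ω := by
          funext ω
          simp only [Function.comp_apply, hpair]
        rw [he1, he2] at hcomp
        exact hcomp
      -- cross terms vanish
      have hcross : ∀ j, ∫ ω, W j ω * (ε i ω * X i j ω) ∂μ = 0 := by
        intro j
        have h1 := (hWZindep j).integral_mul_eq_mul_integral (hWint j).aestronglyMeasurable (hZint i j).aestronglyMeasurable
        have h2 : ∫ ω, W j ω * (ε i ω * X i j ω) ∂μ
            = (∫ ω, W j ω ∂μ) * ∫ ω, ε i ω * X i j ω ∂μ := by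
          exact h1
        rw [h2, horth i j, mul_zero]
      have hDmeq : ∀ ω, Dm m (Sf ω) (Zf ω) = ∑ j, W j ω * (ε i ω * X i j ω) := by
        intro ω
        rw [Dm, Finset.mul_sum]
        refine Finset.sum_congr rfl fun j _ => ?_
        simp only [hW, hZf, hSf]
        ring
      have hDmint : Integrable (fun ω => Dm m (Sf ω) (Zf ω)) μ := by
        have he : (fun ω => Dm m (Sf ω) (Zf ω))
            = fun ω => ∑ j, W j ω * (ε i ω * X i j ω) := funext hDmeq
        rw [he]
        refine integrable_finset_sum _ fun j _ => ?_
        have := (hWZindep j).integrable_mul (hWint j) (hZint i j)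
        exact this
      have hDmzero : ∫ ω, Dm m (Sf ω) (Zf ω) ∂μ = 0 := by
        simp only [hDmeq]
        rw [integral_finset_sum _ fun j _ => by
          have := (hWZindep j).integrable_mul (hWint j) (hZint i j)
          exact this]
        exact Finset.sum_eq_zero fun j _ => hcross j
      -- Fm of the new summand
      have hZsingle : (fun ω => Fm m (fun j => ∑ i' ∈ ({i} : Finset (Fin n)), ε i' ω * X i' j ω))
          = fun ω => Fm m (Zf ω) := by
        funext ω
        congr 1
        funext j
        rw [Finset.sum_singleton]
      have hFmZint : Integrable (fun ω => Fm m (Zf ω)) μ := by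
        rw [← hZsingle]; exact hFmint {i}
      have hFmZle : ∫ ω, Fm m (Zf ω) ∂μ ≤ B := by
        rw [← hZsingle]; exact hFmZ i
      have hcoef : (0:ℝ) ≤ 2*(m:ℝ)-1 := by linarith
      -- put everything together
      calc ∫ ω, Fm m (fun j => ∑ i' ∈ Finset.cons i s hi, ε i' ω * X i' j ω) ∂μ
          ≤ ∫ ω, (Fm m (Sf ω) + Dm m (Sf ω) (Zf ω) + (2*(m:ℝ)-1) * Fm m (Zf ω)) ∂μ := by
            refine integral_mono (hFmint (Finset.cons i s hi)) ?_ hpt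
            exact ((hFmint s).add hDmint).add (hFmZint.const_mul _)
        _ = (∫ ω, Fm m (Sf ω) ∂μ) + (∫ ω, Dm m (Sf ω) (Zf ω) ∂μ)
            + (2*(m:ℝ)-1) * ∫ ω, Fm m (Zf ω) ∂μ := by
            have hI1 : Integrable (fun ω => Fm m (Sf ω) + Dm m (Sf ω) (Zf ω)) μ :=
              (hFmint s).add hDmint
            have hI2 : Integrable (fun ω => (2*(m:ℝ)-1) * Fm m (Zf ω)) μ :=
              hFmZint.const_mul _
            rw [integral_add hI1 hI2, integral_add (hFmint s) hDmint, integral_const_mul]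
        _ ≤ (2*(m:ℝ)-1) * s.card * B + 0 + (2*(m:ℝ)-1) * B := by
            refine add_le_add (add_le_add ih (le_of_eq hDmzero)) ?_
            exact mul_le_mul_of_nonneg_left hFmZle hcoef
        _ = (2*(m:ℝ)-1) * (Finset.cons i s hi).card * B := by
            rw [Finset.card_cons]
            push_cast
            ring
  -- final assembly
  haveI : Nonempty (Fin p) := ⟨⟨0, hp⟩⟩
  have hsup : ∀ᵐ ω ∂μ, (⨆ j : Fin p, |(n:ℝ)⁻¹ * ∑ i, ε i ω * X i j ω|^2)
      ≤ ((n:ℝ)⁻¹)^2 * Fm m (fun j => ∑ i, ε i ω * X i j ω) := by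
    refine Filter.Eventually.of_forall fun ω => ?_
    refine ciSup_le fun j => ?_
    have habs : |(n:ℝ)⁻¹ * ∑ i, ε i ω * X i j ω|^2
        = ((n:ℝ)⁻¹)^2 * (∑ i, ε i ω * X i j ω)^2 := by
      rw [abs_mul, mul_pow, sq_abs, sq_abs]
    rw [habs]
    refine mul_le_mul_of_nonneg_left ?_ (by positivity)
    have h3 := pow_le_Gm m (fun j' => ∑ i, ε i ω * X i j' ω) j
    calc (∑ i, ε i ω * X i j ω)^2
        = (((∑ i, ε i ω * X i j ω)^2)^m)^((m:ℝ)⁻¹) :=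
          (Real.pow_rpow_inv_natCast (sq_nonneg _) hm0').symm
      _ = ((∑ i, ε i ω * X i j ω)^(2*m))^((m:ℝ)⁻¹) := by rw [← pow_mul]
      _ ≤ Gm m (fun j' => ∑ i, ε i ω * X i j' ω) ^ ((m:ℝ)⁻¹) := by
          refine Real.rpow_le_rpow ?_ h3 (by positivity)
          exact (even_two_mul m).pow_nonneg _
      _ = Fm m (fun j' => ∑ i, ε i ω * X i j' ω) := rfl
  have hnum := nem_numeric p hp
  rw [← hLdef, ← hmdef] at hnum
  calc ∫ ω, (⨆ j : Fin p, |(n:ℝ)⁻¹ * ∑ i, ε i ω * X i j ω|^2) ∂μ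
      ≤ ∫ ω, ((n:ℝ)⁻¹)^2 * Fm m (fun j => ∑ i, ε i ω * X i j ω) ∂μ := by
        refine integral_mono_of_nonneg ?_ ((hFmint Finset.univ).const_mul _) hsup
        exact Filter.Eventually.of_forall fun ω => Real.iSup_nonneg fun j => by positivity
    _ = ((n:ℝ)⁻¹)^2 * ∫ ω, Fm m (fun j => ∑ i, ε i ω * X i j ω) ∂μ := integral_const_mul _ _
    _ ≤ ((n:ℝ)⁻¹)^2 * ((2*(m:ℝ)-1) * (Finset.univ : Finset (Fin n)).card * B) :=
        mul_le_mul_of_nonneg_left (hind Finset.univ) (by positivity)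
    _ = (2*(m:ℝ)-1) * (p:ℝ)^((m:ℝ)⁻¹) * C₂^2 * C₆ / n := by
        rw [Finset.card_univ, Fintype.card_fin, hBdef]
        have hn0 : (n:ℝ) ≠ 0 := Nat.cast_ne_zero.mpr (by omega)
        field_simp
    _ ≤ 8 * L * C₂^2 * C₆ / n := by
        have hn0 : (0:ℝ) < (n:ℝ) := by exact_mod_cast hn
        rw [div_le_div_iff_of_pos_right hn0]
        exact mul_le_mul_of_nonneg_right (mul_le_mul_of_nonneg_right hnum (sq_nonneg C₂)) hC₆
end
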